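/- Let B1, B2 : ℝ³ → ℝ² be B1(x1,x2,x3) = (x1,x2) and B2(x1,x2,x3) = (x2,x3). If V ≤ ℝ³ is a subspace with B1(V) ≤ span{w} and B2(V) ≤ span{w} for some w = (w1,w2) ∈ ℝ², then V ≤ span{(w1², w1·w2, w2²)}; in particular dim(V) ≤ 1. -/

import Mathlib

/-- The linear map `B1 : ℝ³ → ℝ²`, `(x₁,x₂,x₃) ↦ (x₁,x₂)`. -/
noncomputable def B1 : (Fin 3 → ℝ) →ₗ[ℝ] (Fin 2 → ℝ) :=
  LinearMap.pi fun j => LinearMap.proj (j.castSucc)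

/-- The linear map `B2 : ℝ³ → ℝ²`, `(x₁,x₂,x₃) ↦ (x₂,x₃)`. -/
noncomputable def B2 : (Fin 3 → ℝ) →ₗ[ℝ] (Fin 2 → ℝ) :=
  LinearMap.pi fun j => LinearMap.proj (j.succ)

theorem subspace_le_span_of_images_le_line (V : Submodule ℝ (Fin 3 → ℝ)) (w : Fin 2 → ℝ)
    (h1 : V.map B1 ≤ Submodule.span ℝ {w}) (h2 : V.map B2 ≤ Submodule.span ℝ {w}) :
    V ≤ Submodule.span ℝ {![w 0 ^ 2, w 0 * w 1, w 1 ^ 2]} ∧ Module.finrank ℝ V ≤ 1 := by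
  have hle : V ≤ Submodule.span ℝ {![w 0 ^ 2, w 0 * w 1, w 1 ^ 2]} := by
    intro v hv
    obtain ⟨a, ha⟩ := Submodule.mem_span_singleton.1 (h1 ⟨v, hv, rfl⟩)
    obtain ⟨b, hb⟩ := Submodule.mem_span_singleton.1 (h2 ⟨v, hv, rfl⟩)
    have ha0 : a * w 0 = v 0 := by simpa [B1] using congrFun ha 0
    have ha1 : a * w 1 = v 1 := by simpa [B1] using congrFun ha 1
    have hb0 : b * w 0 = v 1 := by simpa [B2] using congrFun hb 0
    have hb1 : b * w 1 = v 2 := by simpa [B2] using congrFun hb 1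
    rw [Submodule.mem_span_singleton]
    by_cases hw0 : w 0 = 0
    · by_cases hw1 : w 1 = 0
      · refine ⟨0, funext fun i => ?_⟩
        fin_cases i
        · simp; linear_combination ha0 - a * hw0
        · simp; linear_combination hb0 - b * hw0
        · simp; linear_combination hb1 - b * hw1
      · refine ⟨b / w 1, funext fun i => ?_⟩
        fin_cases i
        · simp; field_simp; linear_combination b * w 0 * hw0 + w 1 * ha0 - a * w 1 * hw0
        · simp; field_simp; linear_combination hb0
        · simp; field_simp; linear_combination hb1
    · refine ⟨a / w 0, funext fun i => ?_⟩
      fin_cases i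
      · simp; field_simp; linear_combination ha0
      · simp; field_simp; linear_combination ha1
      · simp; field_simp; linear_combination w 1 * ha1 - w 1 * hb0 + w 0 * hb1
  refine ⟨hle, ?_⟩
  calc Module.finrank ℝ V ≤ Module.finrank ℝ (Submodule.span ℝ {![w 0 ^ 2, w 0 * w 1, w 1 ^ 2]}) :=
        Submodule.finrank_mono hle
    _ ≤ _ := by simpa using finrank_span_le_card (R := ℝ) {![w 0 ^ 2, w 0 * w 1, w 1 ^ 2]}
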